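/- Realize the root system Φ of type D₄ concretely as Φ = {±eᵢ ± eⱼ : 1 ≤ i < j ≤ 4} ⊂ ℚ⁴ with the standard inner product ⟨·,·⟩, let δ = e₁ + e₂, Φ₀ = {α ∈ Φ : ⟨α, δ⟩ = 0}, Φ₁ = {α ∈ Φ : ⟨α, δ⟩ = 1}, and let W₀ be the group generated by the reflections s_α for α ∈ Φ₀. Then the action of W₀ on the collection of 2-element subsets {α, β} ⊆ Φ₁ with ⟨α, β⟩ = 0 has exactly three orbits. -/

import Mathlib

/-- The standard inner product on `ℚˡ`. -/
def ip {l : ℕ} (x y : Fin l → ℚ) : ℚ := ∑ i, x i * y i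

/-- The standard basis vector `eᵢ` of `ℚˡ`. -/
def ev {l : ℕ} (i : Fin l) : Fin l → ℚ := Pi.single i 1

/-- The root system of type `D_l`: `Φ = {±eᵢ ± eⱼ : i < j}`. -/
def PhiD (l : ℕ) : Set (Fin l → ℚ) :=
  {α | ∃ i j : Fin l, i < j ∧
    (α = ev i + ev j ∨ α = ev i - ev j ∨ α = -ev i + ev j ∨ α = -ev i - ev j)}

/-- The maximal root `δ = e₁ + e₂` of `D_l`. -/
def deltaD (l : ℕ) (hl : 4 ≤ l) : Fin l → ℚ :=
  ev ⟨0, by omega⟩ + ev ⟨1, by omega⟩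

/-- The roots orthogonal to `δ`. -/
def Phi0D (l : ℕ) (hl : 4 ≤ l) : Set (Fin l → ℚ) :=
  {α ∈ PhiD l | ip α (deltaD l hl) = 0}

/-- The roots with `⟨α, δ⟩ = 1`. -/
def Phi1D (l : ℕ) (hl : 4 ≤ l) : Set (Fin l → ℚ) :=
  {α ∈ PhiD l | ip α (deltaD l hl) = 1}

/-- The group `W₀` generated by the reflections `s_α`, `α ∈ Φ₀`. -/
def W0D (l : ℕ) (hl : 4 ≤ l) : Subgroup ((Fin l → ℚ) ≃ₗ[ℚ] (Fin l → ℚ)) :=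
  Subgroup.closure
    {g | ∃ α ∈ Phi0D l hl, ∀ x, g x = x - (2 * ip x α / ip α α) • α}

/-- The collection of 2-element subsets of `Φ₁` consisting of orthogonal roots. -/
def OrthPairsD (l : ℕ) (hl : 4 ≤ l) : Set (Set (Fin l → ℚ)) :=
  {S | S ⊆ Phi1D l hl ∧ S.ncard = 2 ∧ ∀ α ∈ S, ∀ β ∈ S, α ≠ β → ip α β = 0}

/-- `S` and `T` lie in the same `W₀`-orbit (elementwise action on subsets). -/
def SameW0OrbitD (l : ℕ) (hl : 4 ≤ l) (S T : Set (Fin l → ℚ)) : Prop :=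
  ∃ w ∈ W0D l hl, (fun x => w x) '' S = T


lemma cv01pp : ev (⟨0, by omega⟩ : Fin 4) + ev ⟨1, by omega⟩ = ![1,1,0,0] := by
  funext k; fin_cases k <;> simp +decide [ev, Pi.single, Function.update, Fin.ext_iff]
lemma cv01pm : ev (⟨0, by omega⟩ : Fin 4) - ev ⟨1, by omega⟩ = ![1,-1,0,0] := by
  funext k; fin_cases k <;> simp +decide [ev, Pi.single, Function.update, Fin.ext_iff]
lemma cv01mp : -ev (⟨0, by omega⟩ : Fin 4) + ev ⟨1, by omega⟩ = ![-1,1,0,0] := by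
  funext k; fin_cases k <;> simp +decide [ev, Pi.single, Function.update, Fin.ext_iff]
lemma cv01mm : -ev (⟨0, by omega⟩ : Fin 4) - ev ⟨1, by omega⟩ = ![-1,-1,0,0] := by
  funext k; fin_cases k <;> simp +decide [ev, Pi.single, Function.update, Fin.ext_iff]
lemma cv02pp : ev (⟨0, by omega⟩ : Fin 4) + ev ⟨2, by omega⟩ = ![1,0,1,0] := by
  funext k; fin_cases k <;> simp +decide [ev, Pi.single, Function.update, Fin.ext_iff]
lemma cv02pm : ev (⟨0, by omega⟩ : Fin 4) - ev ⟨2, by omega⟩ = ![1,0,-1,0] := by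
  funext k; fin_cases k <;> simp +decide [ev, Pi.single, Function.update, Fin.ext_iff]
lemma cv02mp : -ev (⟨0, by omega⟩ : Fin 4) + ev ⟨2, by omega⟩ = ![-1,0,1,0] := by
  funext k; fin_cases k <;> simp +decide [ev, Pi.single, Function.update, Fin.ext_iff]
lemma cv02mm : -ev (⟨0, by omega⟩ : Fin 4) - ev ⟨2, by omega⟩ = ![-1,0,-1,0] := by
  funext k; fin_cases k <;> simp +decide [ev, Pi.single, Function.update, Fin.ext_iff]
lemma cv03pp : ev (⟨0, by omega⟩ : Fin 4) + ev ⟨3, by omega⟩ = ![1,0,0,1] := by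
  funext k; fin_cases k <;> simp +decide [ev, Pi.single, Function.update, Fin.ext_iff]
lemma cv03pm : ev (⟨0, by omega⟩ : Fin 4) - ev ⟨3, by omega⟩ = ![1,0,0,-1] := by
  funext k; fin_cases k <;> simp +decide [ev, Pi.single, Function.update, Fin.ext_iff]
lemma cv03mp : -ev (⟨0, by omega⟩ : Fin 4) + ev ⟨3, by omega⟩ = ![-1,0,0,1] := by
  funext k; fin_cases k <;> simp +decide [ev, Pi.single, Function.update, Fin.ext_iff]
lemma cv03mm : -ev (⟨0, by omega⟩ : Fin 4) - ev ⟨3, by omega⟩ = ![-1,0,0,-1] := by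
  funext k; fin_cases k <;> simp +decide [ev, Pi.single, Function.update, Fin.ext_iff]
lemma cv12pp : ev (⟨1, by omega⟩ : Fin 4) + ev ⟨2, by omega⟩ = ![0,1,1,0] := by
  funext k; fin_cases k <;> simp +decide [ev, Pi.single, Function.update, Fin.ext_iff]
lemma cv12pm : ev (⟨1, by omega⟩ : Fin 4) - ev ⟨2, by omega⟩ = ![0,1,-1,0] := by
  funext k; fin_cases k <;> simp +decide [ev, Pi.single, Function.update, Fin.ext_iff]
lemma cv12mp : -ev (⟨1, by omega⟩ : Fin 4) + ev ⟨2, by omega⟩ = ![0,-1,1,0] := by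
  funext k; fin_cases k <;> simp +decide [ev, Pi.single, Function.update, Fin.ext_iff]
lemma cv12mm : -ev (⟨1, by omega⟩ : Fin 4) - ev ⟨2, by omega⟩ = ![0,-1,-1,0] := by
  funext k; fin_cases k <;> simp +decide [ev, Pi.single, Function.update, Fin.ext_iff]
lemma cv13pp : ev (⟨1, by omega⟩ : Fin 4) + ev ⟨3, by omega⟩ = ![0,1,0,1] := by
  funext k; fin_cases k <;> simp +decide [ev, Pi.single, Function.update, Fin.ext_iff]
lemma cv13pm : ev (⟨1, by omega⟩ : Fin 4) - ev ⟨3, by omega⟩ = ![0,1,0,-1] := by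
  funext k; fin_cases k <;> simp +decide [ev, Pi.single, Function.update, Fin.ext_iff]
lemma cv13mp : -ev (⟨1, by omega⟩ : Fin 4) + ev ⟨3, by omega⟩ = ![0,-1,0,1] := by
  funext k; fin_cases k <;> simp +decide [ev, Pi.single, Function.update, Fin.ext_iff]
lemma cv13mm : -ev (⟨1, by omega⟩ : Fin 4) - ev ⟨3, by omega⟩ = ![0,-1,0,-1] := by
  funext k; fin_cases k <;> simp +decide [ev, Pi.single, Function.update, Fin.ext_iff]
lemma cv23pp : ev (⟨2, by omega⟩ : Fin 4) + ev ⟨3, by omega⟩ = ![0,0,1,1] := by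
  funext k; fin_cases k <;> simp +decide [ev, Pi.single, Function.update, Fin.ext_iff]
lemma cv23pm : ev (⟨2, by omega⟩ : Fin 4) - ev ⟨3, by omega⟩ = ![0,0,1,-1] := by
  funext k; fin_cases k <;> simp +decide [ev, Pi.single, Function.update, Fin.ext_iff]
lemma cv23mp : -ev (⟨2, by omega⟩ : Fin 4) + ev ⟨3, by omega⟩ = ![0,0,-1,1] := by
  funext k; fin_cases k <;> simp +decide [ev, Pi.single, Function.update, Fin.ext_iff]
lemma cv23mm : -ev (⟨2, by omega⟩ : Fin 4) - ev ⟨3, by omega⟩ = ![0,0,-1,-1] := by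
  funext k; fin_cases k <;> simp +decide [ev, Pi.single, Function.update, Fin.ext_iff]


lemma dvec : deltaD 4 (le_refl 4) = ![1,1,0,0] := cv01pp

lemma ip4 (x y : Fin 4 → ℚ) : ip x y = x 0 * y 0 + x 1 * y 1 + x 2 * y 2 + x 3 * y 3 := by
  simp [ip, Fin.sum_univ_four]

lemma Phi1_sub : Phi1D 4 (le_refl 4) ⊆
    ({![1,0,1,0], ![1,0,-1,0], ![1,0,0,1], ![1,0,0,-1],
      ![0,1,1,0], ![0,1,-1,0], ![0,1,0,1], ![0,1,0,-1]} : Set (Fin 4 → ℚ)) := by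
  rintro α ⟨⟨i, j, hij, h⟩, hip⟩
  fin_cases i <;> fin_cases j <;>
    first
    | exact absurd hij (by decide)
    | (rcases h with h | h | h | h <;> subst h <;>
        simp only [cv01pp, cv01pm, cv01mp, cv01mm, cv02pp, cv02pm, cv02mp, cv02mm, cv03pp, cv03pm, cv03mp, cv03mm, cv12pp, cv12pm, cv12mp, cv12mm, cv13pp, cv13pm, cv13mp, cv13mm, cv23pp, cv23pm, cv23mp, cv23mm, dvec] at hip ⊢ <;>
        rw [ip4] at hip <;> norm_num [Matrix.cons_val_two, Matrix.cons_val_three] at hip <;> simp)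

lemma Phi0_sub : Phi0D 4 (le_refl 4) ⊆
    ({![1,-1,0,0], ![-1,1,0,0], ![0,0,1,1], ![0,0,1,-1], ![0,0,-1,1], ![0,0,-1,-1]} :
      Set (Fin 4 → ℚ)) := by
  rintro α ⟨⟨i, j, hij, h⟩, hip⟩
  fin_cases i <;> fin_cases j <;>
    first
    | exact absurd hij (by decide)
    | (rcases h with h | h | h | h <;> subst h <;>
        simp only [cv01pp, cv01pm, cv01mp, cv01mm, cv02pp, cv02pm, cv02mp, cv02mm, cv03pp, cv03pm, cv03mp, cv03mm, cv12pp, cv12pm, cv12mp, cv12mm, cv13pp, cv13pm, cv13mp, cv13mm, cv23pp, cv23pm, cv23mp, cv23mm, dvec] at hip ⊢ <;>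
        rw [ip4] at hip <;> norm_num [Matrix.cons_val_two, Matrix.cons_val_three] at hip <;> simp)


-- backward memberships
lemma mem1 : ![1,0,1,0] ∈ Phi1D 4 (le_refl 4) :=
  ⟨⟨⟨0, by omega⟩, ⟨2, by omega⟩, by decide, Or.inl cv02pp.symm⟩, by rw [dvec]; norm_num [Matrix.cons_val_two, Matrix.cons_val_three, ip4]⟩
lemma mem2 : ![1,0,-1,0] ∈ Phi1D 4 (le_refl 4) :=
  ⟨⟨⟨0, by omega⟩, ⟨2, by omega⟩, by decide, Or.inr (Or.inl cv02pm.symm)⟩, by rw [dvec]; norm_num [Matrix.cons_val_two, Matrix.cons_val_three, ip4]⟩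
lemma mem7 : ![0,1,0,1] ∈ Phi1D 4 (le_refl 4) :=
  ⟨⟨⟨1, by omega⟩, ⟨3, by omega⟩, by decide, Or.inl cv13pp.symm⟩, by rw [dvec]; norm_num [Matrix.cons_val_two, Matrix.cons_val_three, ip4]⟩
lemma mem8 : ![0,1,0,-1] ∈ Phi1D 4 (le_refl 4) :=
  ⟨⟨⟨1, by omega⟩, ⟨3, by omega⟩, by decide, Or.inr (Or.inl cv13pm.symm)⟩, by rw [dvec]; norm_num [Matrix.cons_val_two, Matrix.cons_val_three, ip4]⟩

lemma mem0a : ![1,-1,0,0] ∈ Phi0D 4 (le_refl 4) :=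
  ⟨⟨⟨0, by omega⟩, ⟨1, by omega⟩, by decide, Or.inr (Or.inl cv01pm.symm)⟩, by rw [dvec]; norm_num [Matrix.cons_val_two, Matrix.cons_val_three, ip4]⟩
lemma mem0b : ![0,0,1,-1] ∈ Phi0D 4 (le_refl 4) :=
  ⟨⟨⟨2, by omega⟩, ⟨3, by omega⟩, by decide, Or.inr (Or.inl cv23pm.symm)⟩, by rw [dvec]; norm_num [Matrix.cons_val_two, Matrix.cons_val_three, ip4]⟩
lemma mem0c : ![0,0,1,1] ∈ Phi0D 4 (le_refl 4) :=
  ⟨⟨⟨2, by omega⟩, ⟨3, by omega⟩, by decide, Or.inl cv23pp.symm⟩, by rw [dvec]; norm_num [Matrix.cons_val_two, Matrix.cons_val_three, ip4]⟩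

-- the three generating reflections
def r1 : (Fin 4 → ℚ) ≃ₗ[ℚ] (Fin 4 → ℚ) where
  toFun x := ![x 1, x 0, x 2, x 3]
  invFun x := ![x 1, x 0, x 2, x 3]
  left_inv x := by funext i; fin_cases i <;> rfl
  right_inv x := by funext i; fin_cases i <;> rfl
  map_add' x y := by funext i; fin_cases i <;> rfl
  map_smul' c x := by funext i; fin_cases i <;> rfl

def r2 : (Fin 4 → ℚ) ≃ₗ[ℚ] (Fin 4 → ℚ) where
  toFun x := ![x 0, x 1, x 3, x 2]
  invFun x := ![x 0, x 1, x 3, x 2]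
  left_inv x := by funext i; fin_cases i <;> rfl
  right_inv x := by funext i; fin_cases i <;> rfl
  map_add' x y := by funext i; fin_cases i <;> rfl
  map_smul' c x := by funext i; fin_cases i <;> rfl

def r3 : (Fin 4 → ℚ) ≃ₗ[ℚ] (Fin 4 → ℚ) where
  toFun x := ![x 0, x 1, -x 3, -x 2]
  invFun x := ![x 0, x 1, -x 3, -x 2]
  left_inv x := by funext i; fin_cases i <;> simp
  right_inv x := by funext i; fin_cases i <;> simp
  map_add' x y := by funext i; fin_cases i <;> simp <;> ring
  map_smul' c x := by funext i; fin_cases i <;> simp <;> ring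

lemma r1mem : r1 ∈ W0D 4 (le_refl 4) := by
  apply Subgroup.subset_closure
  refine ⟨![1,-1,0,0], mem0a, fun x => ?_⟩
  funext i
  fin_cases i <;> simp [r1, ip4] <;> norm_num <;> ring

lemma r2mem : r2 ∈ W0D 4 (le_refl 4) := by
  apply Subgroup.subset_closure
  refine ⟨![0,0,1,-1], mem0b, fun x => ?_⟩
  funext i
  fin_cases i <;> simp [r2, ip4] <;> norm_num <;> ring

lemma r3mem : r3 ∈ W0D 4 (le_refl 4) := by
  apply Subgroup.subset_closure
  refine ⟨![0,0,1,1], mem0c, fun x => ?_⟩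
  funext i
  fin_cases i <;> simp [r3, ip4] <;> norm_num <;> ring

-- the eight candidate signed-permutation actions
def Fm (b c e : Bool) (x : Fin 4 → ℚ) : Fin 4 → ℚ :=
  ![x (if b then 1 else 0), x (if b then 0 else 1),
    (if e then (-1:ℚ) else 1) * x (if c then 3 else 2),
    (if e then (-1:ℚ) else 1) * x (if c then 2 else 3)]

lemma Fm_id (x : Fin 4 → ℚ) : Fm false false false x = x := by
  funext i; fin_cases i <;> simp [Fm]

lemma Fm_comp (b c e b' c' e' : Bool) (x : Fin 4 → ℚ) :
    Fm b c e (Fm b' c' e' x) = Fm (xor b b') (xor c c') (xor e e') x := by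
  cases b <;> cases c <;> cases e <;> cases b' <;> cases c' <;> cases e' <;>
    (funext i; fin_cases i <;> simp [Fm] <;> ring)

lemma Fm_invol (b c e : Bool) (x : Fin 4 → ℚ) : Fm b c e (Fm b c e x) = x := by
  rw [Fm_comp]; simp [Fm_id]

lemma W0_form {w : (Fin 4 → ℚ) ≃ₗ[ℚ] (Fin 4 → ℚ)} (hw : w ∈ W0D 4 (le_refl 4)) :
    ∃ b c e, ∀ x, w x = Fm b c e x := by
  refine Subgroup.closure_induction
    (p := fun w _ => ∃ b c e, ∀ x, w x = Fm b c e x) ?_ ?_ ?_ ?_ hw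
  · rintro g ⟨α, hα, hg⟩
    rcases Phi0_sub hα with h | h | h | h | h | h <;> subst h
    · exact ⟨true, false, false, fun x => by
        funext i; rw [hg x]; fin_cases i <;> simp [Fm, ip4] <;> norm_num <;> ring⟩
    · exact ⟨true, false, false, fun x => by
        funext i; rw [hg x]; fin_cases i <;> simp [Fm, ip4] <;> norm_num <;> ring⟩
    · exact ⟨false, true, true, fun x => by
        funext i; rw [hg x]; fin_cases i <;> simp [Fm, ip4] <;> norm_num <;> ring⟩
    · exact ⟨false, true, false, fun x => by
        funext i; rw [hg x]; fin_cases i <;> simp [Fm, ip4] <;> norm_num <;> ring⟩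
    · exact ⟨false, true, false, fun x => by
        funext i; rw [hg x]; fin_cases i <;> simp [Fm, ip4] <;> norm_num <;> ring⟩
    · exact ⟨false, true, true, fun x => by
        funext i; rw [hg x]; fin_cases i <;> simp [Fm, ip4] <;> norm_num <;> ring⟩
  · exact ⟨false, false, false, fun x => (Fm_id x).symm⟩
  · rintro u v _ _ ⟨b, c, e, hu⟩ ⟨b', c', e', hv⟩
    exact ⟨xor b b', xor c c', xor e e', fun x => by
      show u (v x) = _
      rw [hv x, hu _, Fm_comp]⟩
  · rintro u _ ⟨b, c, e, hu⟩
    refine ⟨b, c, e, fun x => ?_⟩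
    have h2 : u (Fm b c e x) = x := by rw [hu _, Fm_invol]
    show u.symm x = _
    conv_lhs => rw [← h2]
    · rw [LinearEquiv.symm_apply_apply]

lemma mul_app (u v : (Fin 4 → ℚ) ≃ₗ[ℚ] (Fin 4 → ℚ)) (x : Fin 4 → ℚ) : (u * v) x = u (v x) := rfl
lemma one_app (x : Fin 4 → ℚ) : (1 : (Fin 4 → ℚ) ≃ₗ[ℚ] (Fin 4 → ℚ)) x = x := rfl

lemma orbA0 : SameW0OrbitD 4 (le_refl 4) {![1,0,1,0], ![1,0,-1,0]} ({![1,0,1,0], ![1,0,-1,0]} : Set (Fin 4 → ℚ)) := by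
  refine ⟨(1 : (Fin 4 → ℚ) ≃ₗ[ℚ] (Fin 4 → ℚ)), one_mem _, ?_⟩
  rw [Set.image_pair, Set.pair_eq_pair_iff]
  left
  constructor <;> (funext k; fin_cases k <;> norm_num [Matrix.cons_val_two, Matrix.cons_val_three, mul_app, one_app, r1, r2, r3])
lemma orbA0s : SameW0OrbitD 4 (le_refl 4) {![1,0,1,0], ![1,0,-1,0]} ({![1,0,-1,0], ![1,0,1,0]} : Set (Fin 4 → ℚ)) := by
  refine ⟨(1 : (Fin 4 → ℚ) ≃ₗ[ℚ] (Fin 4 → ℚ)), one_mem _, ?_⟩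
  rw [Set.image_pair, Set.pair_eq_pair_iff]
  right
  constructor <;> (funext k; fin_cases k <;> norm_num [Matrix.cons_val_two, Matrix.cons_val_three, mul_app, one_app, r1, r2, r3])
lemma orbA1 : SameW0OrbitD 4 (le_refl 4) {![1,0,1,0], ![1,0,-1,0]} ({![0,1,1,0], ![0,1,-1,0]} : Set (Fin 4 → ℚ)) := by
  refine ⟨r1, r1mem, ?_⟩
  rw [Set.image_pair, Set.pair_eq_pair_iff]
  left
  constructor <;> (funext k; fin_cases k <;> norm_num [Matrix.cons_val_two, Matrix.cons_val_three, mul_app, one_app, r1, r2, r3])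
lemma orbA1s : SameW0OrbitD 4 (le_refl 4) {![1,0,1,0], ![1,0,-1,0]} ({![0,1,-1,0], ![0,1,1,0]} : Set (Fin 4 → ℚ)) := by
  refine ⟨r1, r1mem, ?_⟩
  rw [Set.image_pair, Set.pair_eq_pair_iff]
  right
  constructor <;> (funext k; fin_cases k <;> norm_num [Matrix.cons_val_two, Matrix.cons_val_three, mul_app, one_app, r1, r2, r3])
lemma orbA2 : SameW0OrbitD 4 (le_refl 4) {![1,0,1,0], ![1,0,-1,0]} ({![1,0,0,1], ![1,0,0,-1]} : Set (Fin 4 → ℚ)) := by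
  refine ⟨r2, r2mem, ?_⟩
  rw [Set.image_pair, Set.pair_eq_pair_iff]
  left
  constructor <;> (funext k; fin_cases k <;> norm_num [Matrix.cons_val_two, Matrix.cons_val_three, mul_app, one_app, r1, r2, r3])
lemma orbA2s : SameW0OrbitD 4 (le_refl 4) {![1,0,1,0], ![1,0,-1,0]} ({![1,0,0,-1], ![1,0,0,1]} : Set (Fin 4 → ℚ)) := by
  refine ⟨r2, r2mem, ?_⟩
  rw [Set.image_pair, Set.pair_eq_pair_iff]
  right
  constructor <;> (funext k; fin_cases k <;> norm_num [Matrix.cons_val_two, Matrix.cons_val_three, mul_app, one_app, r1, r2, r3])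
lemma orbA3 : SameW0OrbitD 4 (le_refl 4) {![1,0,1,0], ![1,0,-1,0]} ({![0,1,0,1], ![0,1,0,-1]} : Set (Fin 4 → ℚ)) := by
  refine ⟨r1 * r2, mul_mem r1mem r2mem, ?_⟩
  rw [Set.image_pair, Set.pair_eq_pair_iff]
  left
  constructor <;> (funext k; fin_cases k <;> norm_num [Matrix.cons_val_two, Matrix.cons_val_three, mul_app, one_app, r1, r2, r3])
lemma orbA3s : SameW0OrbitD 4 (le_refl 4) {![1,0,1,0], ![1,0,-1,0]} ({![0,1,0,-1], ![0,1,0,1]} : Set (Fin 4 → ℚ)) := by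
  refine ⟨r1 * r2, mul_mem r1mem r2mem, ?_⟩
  rw [Set.image_pair, Set.pair_eq_pair_iff]
  right
  constructor <;> (funext k; fin_cases k <;> norm_num [Matrix.cons_val_two, Matrix.cons_val_three, mul_app, one_app, r1, r2, r3])
lemma orbB0 : SameW0OrbitD 4 (le_refl 4) {![1,0,1,0], ![0,1,0,1]} ({![1,0,1,0], ![0,1,0,1]} : Set (Fin 4 → ℚ)) := by
  refine ⟨(1 : (Fin 4 → ℚ) ≃ₗ[ℚ] (Fin 4 → ℚ)), one_mem _, ?_⟩
  rw [Set.image_pair, Set.pair_eq_pair_iff]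
  left
  constructor <;> (funext k; fin_cases k <;> norm_num [Matrix.cons_val_two, Matrix.cons_val_three, mul_app, one_app, r1, r2, r3])
lemma orbB0s : SameW0OrbitD 4 (le_refl 4) {![1,0,1,0], ![0,1,0,1]} ({![0,1,0,1], ![1,0,1,0]} : Set (Fin 4 → ℚ)) := by
  refine ⟨(1 : (Fin 4 → ℚ) ≃ₗ[ℚ] (Fin 4 → ℚ)), one_mem _, ?_⟩
  rw [Set.image_pair, Set.pair_eq_pair_iff]
  right
  constructor <;> (funext k; fin_cases k <;> norm_num [Matrix.cons_val_two, Matrix.cons_val_three, mul_app, one_app, r1, r2, r3])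
lemma orbB1 : SameW0OrbitD 4 (le_refl 4) {![1,0,1,0], ![0,1,0,1]} ({![1,0,0,1], ![0,1,1,0]} : Set (Fin 4 → ℚ)) := by
  refine ⟨r2, r2mem, ?_⟩
  rw [Set.image_pair, Set.pair_eq_pair_iff]
  left
  constructor <;> (funext k; fin_cases k <;> norm_num [Matrix.cons_val_two, Matrix.cons_val_three, mul_app, one_app, r1, r2, r3])
lemma orbB1s : SameW0OrbitD 4 (le_refl 4) {![1,0,1,0], ![0,1,0,1]} ({![0,1,1,0], ![1,0,0,1]} : Set (Fin 4 → ℚ)) := by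
  refine ⟨r2, r2mem, ?_⟩
  rw [Set.image_pair, Set.pair_eq_pair_iff]
  right
  constructor <;> (funext k; fin_cases k <;> norm_num [Matrix.cons_val_two, Matrix.cons_val_three, mul_app, one_app, r1, r2, r3])
lemma orbB2 : SameW0OrbitD 4 (le_refl 4) {![1,0,1,0], ![0,1,0,1]} ({![1,0,-1,0], ![0,1,0,-1]} : Set (Fin 4 → ℚ)) := by
  refine ⟨r3 * r2, mul_mem r3mem r2mem, ?_⟩
  rw [Set.image_pair, Set.pair_eq_pair_iff]
  left
  constructor <;> (funext k; fin_cases k <;> norm_num [Matrix.cons_val_two, Matrix.cons_val_three, mul_app, one_app, r1, r2, r3])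
lemma orbB2s : SameW0OrbitD 4 (le_refl 4) {![1,0,1,0], ![0,1,0,1]} ({![0,1,0,-1], ![1,0,-1,0]} : Set (Fin 4 → ℚ)) := by
  refine ⟨r3 * r2, mul_mem r3mem r2mem, ?_⟩
  rw [Set.image_pair, Set.pair_eq_pair_iff]
  right
  constructor <;> (funext k; fin_cases k <;> norm_num [Matrix.cons_val_two, Matrix.cons_val_three, mul_app, one_app, r1, r2, r3])
lemma orbB3 : SameW0OrbitD 4 (le_refl 4) {![1,0,1,0], ![0,1,0,1]} ({![1,0,0,-1], ![0,1,-1,0]} : Set (Fin 4 → ℚ)) := by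
  refine ⟨r3, r3mem, ?_⟩
  rw [Set.image_pair, Set.pair_eq_pair_iff]
  left
  constructor <;> (funext k; fin_cases k <;> norm_num [Matrix.cons_val_two, Matrix.cons_val_three, mul_app, one_app, r1, r2, r3])
lemma orbB3s : SameW0OrbitD 4 (le_refl 4) {![1,0,1,0], ![0,1,0,1]} ({![0,1,-1,0], ![1,0,0,-1]} : Set (Fin 4 → ℚ)) := by
  refine ⟨r3, r3mem, ?_⟩
  rw [Set.image_pair, Set.pair_eq_pair_iff]
  right
  constructor <;> (funext k; fin_cases k <;> norm_num [Matrix.cons_val_two, Matrix.cons_val_three, mul_app, one_app, r1, r2, r3])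
lemma orbC0 : SameW0OrbitD 4 (le_refl 4) {![1,0,1,0], ![0,1,0,-1]} ({![1,0,1,0], ![0,1,0,-1]} : Set (Fin 4 → ℚ)) := by
  refine ⟨(1 : (Fin 4 → ℚ) ≃ₗ[ℚ] (Fin 4 → ℚ)), one_mem _, ?_⟩
  rw [Set.image_pair, Set.pair_eq_pair_iff]
  left
  constructor <;> (funext k; fin_cases k <;> norm_num [Matrix.cons_val_two, Matrix.cons_val_three, mul_app, one_app, r1, r2, r3])
lemma orbC0s : SameW0OrbitD 4 (le_refl 4) {![1,0,1,0], ![0,1,0,-1]} ({![0,1,0,-1], ![1,0,1,0]} : Set (Fin 4 → ℚ)) := by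
  refine ⟨(1 : (Fin 4 → ℚ) ≃ₗ[ℚ] (Fin 4 → ℚ)), one_mem _, ?_⟩
  rw [Set.image_pair, Set.pair_eq_pair_iff]
  right
  constructor <;> (funext k; fin_cases k <;> norm_num [Matrix.cons_val_two, Matrix.cons_val_three, mul_app, one_app, r1, r2, r3])
lemma orbC1 : SameW0OrbitD 4 (le_refl 4) {![1,0,1,0], ![0,1,0,-1]} ({![1,0,0,1], ![0,1,-1,0]} : Set (Fin 4 → ℚ)) := by
  refine ⟨r2, r2mem, ?_⟩
  rw [Set.image_pair, Set.pair_eq_pair_iff]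
  left
  constructor <;> (funext k; fin_cases k <;> norm_num [Matrix.cons_val_two, Matrix.cons_val_three, mul_app, one_app, r1, r2, r3])
lemma orbC1s : SameW0OrbitD 4 (le_refl 4) {![1,0,1,0], ![0,1,0,-1]} ({![0,1,-1,0], ![1,0,0,1]} : Set (Fin 4 → ℚ)) := by
  refine ⟨r2, r2mem, ?_⟩
  rw [Set.image_pair, Set.pair_eq_pair_iff]
  right
  constructor <;> (funext k; fin_cases k <;> norm_num [Matrix.cons_val_two, Matrix.cons_val_three, mul_app, one_app, r1, r2, r3])
lemma orbC2 : SameW0OrbitD 4 (le_refl 4) {![1,0,1,0], ![0,1,0,-1]} ({![1,0,-1,0], ![0,1,0,1]} : Set (Fin 4 → ℚ)) := by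
  refine ⟨r3 * r2, mul_mem r3mem r2mem, ?_⟩
  rw [Set.image_pair, Set.pair_eq_pair_iff]
  left
  constructor <;> (funext k; fin_cases k <;> norm_num [Matrix.cons_val_two, Matrix.cons_val_three, mul_app, one_app, r1, r2, r3])
lemma orbC2s : SameW0OrbitD 4 (le_refl 4) {![1,0,1,0], ![0,1,0,-1]} ({![0,1,0,1], ![1,0,-1,0]} : Set (Fin 4 → ℚ)) := by
  refine ⟨r3 * r2, mul_mem r3mem r2mem, ?_⟩
  rw [Set.image_pair, Set.pair_eq_pair_iff]
  right
  constructor <;> (funext k; fin_cases k <;> norm_num [Matrix.cons_val_two, Matrix.cons_val_three, mul_app, one_app, r1, r2, r3])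
lemma orbC3 : SameW0OrbitD 4 (le_refl 4) {![1,0,1,0], ![0,1,0,-1]} ({![1,0,0,-1], ![0,1,1,0]} : Set (Fin 4 → ℚ)) := by
  refine ⟨r3, r3mem, ?_⟩
  rw [Set.image_pair, Set.pair_eq_pair_iff]
  left
  constructor <;> (funext k; fin_cases k <;> norm_num [Matrix.cons_val_two, Matrix.cons_val_three, mul_app, one_app, r1, r2, r3])
lemma orbC3s : SameW0OrbitD 4 (le_refl 4) {![1,0,1,0], ![0,1,0,-1]} ({![0,1,1,0], ![1,0,0,-1]} : Set (Fin 4 → ℚ)) := by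
  refine ⟨r3, r3mem, ?_⟩
  rw [Set.image_pair, Set.pair_eq_pair_iff]
  right
  constructor <;> (funext k; fin_cases k <;> norm_num [Matrix.cons_val_two, Matrix.cons_val_three, mul_app, one_app, r1, r2, r3])

lemma notAB : ¬ SameW0OrbitD 4 (le_refl 4)
    ({![1,0,1,0], ![1,0,-1,0]} : Set (Fin 4 → ℚ)) {![1,0,1,0], ![0,1,0,1]} := by
  rintro ⟨w, hw, him⟩
  obtain ⟨b, c, e, hF⟩ := W0_form hw
  rw [Set.image_pair, hF, hF, Set.pair_eq_pair_iff] at him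
  cases b <;> cases c <;> cases e <;>
    norm_num [Matrix.cons_val_two, Matrix.cons_val_three, Fm, funext_iff, Fin.forall_fin_succ] at him

lemma notAC : ¬ SameW0OrbitD 4 (le_refl 4)
    ({![1,0,1,0], ![1,0,-1,0]} : Set (Fin 4 → ℚ)) {![1,0,1,0], ![0,1,0,-1]} := by
  rintro ⟨w, hw, him⟩
  obtain ⟨b, c, e, hF⟩ := W0_form hw
  rw [Set.image_pair, hF, hF, Set.pair_eq_pair_iff] at him
  cases b <;> cases c <;> cases e <;>
    norm_num [Matrix.cons_val_two, Matrix.cons_val_three, Fm, funext_iff, Fin.forall_fin_succ] at him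

lemma notBC : ¬ SameW0OrbitD 4 (le_refl 4)
    ({![1,0,1,0], ![0,1,0,1]} : Set (Fin 4 → ℚ)) {![1,0,1,0], ![0,1,0,-1]} := by
  rintro ⟨w, hw, him⟩
  obtain ⟨b, c, e, hF⟩ := W0_form hw
  rw [Set.image_pair, hF, hF, Set.pair_eq_pair_iff] at him
  cases b <;> cases c <;> cases e <;>
    norm_num [Matrix.cons_val_two, Matrix.cons_val_three, Fm, funext_iff, Fin.forall_fin_succ] at him

lemma ip_comm (x y : Fin 4 → ℚ) : ip x y = ip y x := by
  simp [ip, mul_comm]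

lemma mk_orth {u v : Fin 4 → ℚ} (hu : u ∈ Phi1D 4 (le_refl 4)) (hv : v ∈ Phi1D 4 (le_refl 4))
    (hne : u ≠ v) (h : ip u v = 0) : ({u, v} : Set (Fin 4 → ℚ)) ∈ OrthPairsD 4 (le_refl 4) := by
  refine ⟨?_, Set.ncard_pair hne, ?_⟩
  · rintro x (rfl | rfl) <;> assumption
  · rintro x (rfl | rfl) y (rfl | rfl) hxy
    · exact absurd rfl hxy
    · exact h
    · rw [ip_comm]; exact h
    · exact absurd rfl hxy

/-- For `D₄`, the action of `W₀` on 2-element orthogonal subsets of `Φ₁`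
has exactly three orbits: there are three pairwise non-equivalent such subsets, and
every such subset is equivalent to one of them. -/
theorem W0_three_orbits_on_orthogonal_pairs_D4 :
    ∃ A B C : Set (Fin 4 → ℚ),
      A ∈ OrthPairsD 4 (le_refl 4) ∧ B ∈ OrthPairsD 4 (le_refl 4) ∧
      C ∈ OrthPairsD 4 (le_refl 4) ∧
      ¬ SameW0OrbitD 4 (le_refl 4) A B ∧
      ¬ SameW0OrbitD 4 (le_refl 4) A C ∧
      ¬ SameW0OrbitD 4 (le_refl 4) B C ∧
      ∀ S ∈ OrthPairsD 4 (le_refl 4),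
        SameW0OrbitD 4 (le_refl 4) A S ∨ SameW0OrbitD 4 (le_refl 4) B S ∨
          SameW0OrbitD 4 (le_refl 4) C S := by
  refine ⟨{![1,0,1,0], ![1,0,-1,0]}, {![1,0,1,0], ![0,1,0,1]}, {![1,0,1,0], ![0,1,0,-1]},
    mk_orth mem1 mem2 (by norm_num [Matrix.cons_val_two, Matrix.cons_val_three, funext_iff, Fin.forall_fin_succ]) (by norm_num [Matrix.cons_val_two, Matrix.cons_val_three, ip4]),
    mk_orth mem1 mem7 (by norm_num [Matrix.cons_val_two, Matrix.cons_val_three, funext_iff, Fin.forall_fin_succ]) (by norm_num [Matrix.cons_val_two, Matrix.cons_val_three, ip4]),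
    mk_orth mem1 mem8 (by norm_num [Matrix.cons_val_two, Matrix.cons_val_three, funext_iff, Fin.forall_fin_succ]) (by norm_num [Matrix.cons_val_two, Matrix.cons_val_three, ip4]),
    notAB, notAC, notBC, ?_⟩
  rintro S ⟨hsub, hcard, horth⟩
  obtain ⟨α, β, hne, rfl⟩ := Set.ncard_eq_two.mp hcard
  have hip : ip α β = 0 := horth α (by simp) β (by simp) hne
  have hα := Phi1_sub (hsub (Set.mem_insert α {β}))
  have hβ := Phi1_sub (hsub (Set.mem_insert_of_mem α rfl))
  simp only [Set.mem_insert_iff, Set.mem_singleton_iff] at hα hβ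
  rcases hα with rfl | rfl | rfl | rfl | rfl | rfl | rfl | rfl <;>
    rcases hβ with rfl | rfl | rfl | rfl | rfl | rfl | rfl | rfl <;>
    first
      | exact absurd rfl hne
      | (exfalso; revert hip; norm_num [Matrix.cons_val_two, Matrix.cons_val_three, ip4]; done)
      | exact Or.inl orbA0 | exact Or.inl orbA0s
      | exact Or.inl orbA1 | exact Or.inl orbA1s
      | exact Or.inl orbA2 | exact Or.inl orbA2s
      | exact Or.inl orbA3 | exact Or.inl orbA3s
      | exact Or.inr (Or.inl orbB0) | exact Or.inr (Or.inl orbB0s)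
      | exact Or.inr (Or.inl orbB1) | exact Or.inr (Or.inl orbB1s)
      | exact Or.inr (Or.inl orbB2) | exact Or.inr (Or.inl orbB2s)
      | exact Or.inr (Or.inl orbB3) | exact Or.inr (Or.inl orbB3s)
      | exact Or.inr (Or.inr orbC0) | exact Or.inr (Or.inr orbC0s)
      | exact Or.inr (Or.inr orbC1) | exact Or.inr (Or.inr orbC1s)
      | exact Or.inr (Or.inr orbC2) | exact Or.inr (Or.inr orbC2s)
      | exact Or.inr (Or.inr orbC3) | exact Or.inr (Or.inr orbC3s)
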